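/- Let G(x) = x^{2^i + 1} on F_{2^n} with gcd(i, n) = 1 and n ≥ 5, and let L_1, L_2 be invertible F_2-linear maps on F_{2^n}. Then L_1 ∘ G = G ∘ L_2 if and only if there exist a ∈ F_{2^n}^× and 0 ≤ k < n with L_1(x) = a^{2^i+1} x^{2^k} and L_2(x) = a x^{2^k}. In particular, the linear automorphism group of G is isomorphic to ΓL(1, 2^n). -/

import Mathlib

open Polynomial Finset

private lemma pow2_core {a b c d : ℕ} (hab : a < b) (hcd : c < d)
    (h : 2^a + 2^b = 2^c + 2^d) : a = c ∧ b = d := by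
  wlog hac : a ≤ c generalizing a b c d with H
  · obtain ⟨h1, h2⟩ := H hcd hab h.symm (by omega)
    omega
  have h2b : (2:ℕ)^b = 2^a * 2^(b-a) := by rw [← pow_add]; congr 1; omega
  have h2c : (2:ℕ)^c = 2^a * 2^(c-a) := by rw [← pow_add]; congr 1; omega
  have h2d : (2:ℕ)^d = 2^a * 2^(d-a) := by rw [← pow_add]; congr 1; omega
  have hpos : 0 < (2:ℕ)^a := pow_pos (by norm_num) _
  have key : 1 + 2^(b-a) = 2^(c-a) + 2^(d-a) := by
    refine Nat.eq_of_mul_eq_mul_left hpos ?_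
    rw [mul_add, mul_add, mul_one, ← h2b, ← h2c, ← h2d]
    exact h
  have hceq : a = c := by
    by_contra hne
    have e1 : 2 ∣ 2^(b-a) := dvd_pow_self 2 (by omega)
    have e2 : 2 ∣ 2^(c-a) := dvd_pow_self 2 (by omega)
    have e3 : 2 ∣ 2^(d-a) := dvd_pow_self 2 (by omega)
    omega
  refine ⟨hceq, ?_⟩
  have : (2:ℕ)^(b-a) = 2^(d-a) := by
    have hca : c - a = 0 := by omega
    rw [hca, pow_zero] at key; omega
  have := Nat.pow_right_injective (le_refl 2) this
  omega

private lemma pow2_ne {a b t : ℕ} (hab : a ≠ b) : 2^a + 2^b ≠ 2^t := by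
  wlog h : a < b generalizing a b with H
  · rw [add_comm]; exact H (Ne.symm hab) (by omega)
  intro hE
  rcases le_or_gt a t with hat | hat
  · have h2b : (2:ℕ)^b = 2^a * 2^(b-a) := by rw [← pow_add]; congr 1; omega
    have h2t : (2:ℕ)^t = 2^a * 2^(t-a) := by rw [← pow_add]; congr 1; omega
    have hpos : 0 < (2:ℕ)^a := pow_pos (by norm_num) _
    have key : 1 + 2^(b-a) = 2^(t-a) := by
      refine Nat.eq_of_mul_eq_mul_left hpos ?_
      rw [mul_add, mul_one, ← h2b, ← h2t]; exact hE
    have e1 : 2 ∣ 2^(b-a) := dvd_pow_self 2 (by omega)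
    have p1 : 0 < (2:ℕ)^(b-a) := pow_pos (by norm_num) _
    rcases Nat.eq_zero_or_pos (t-a) with h0 | hp
    · rw [h0, pow_zero] at key; omega
    · have e2 : 2 ∣ 2^(t-a) := dvd_pow_self 2 (by omega); omega
  · have h1 : (2:ℕ)^t < 2^a := Nat.pow_lt_pow_right (by norm_num) hat
    have h2 : 0 < (2:ℕ)^b := pow_pos (by norm_num) _
    omega

private lemma pow2_pair {a b c d : ℕ} (hab : a ≠ b) (hcd : c ≠ d)
    (h : 2^a + 2^b = 2^c + 2^d) : (a = c ∧ b = d) ∨ (a = d ∧ b = c) := by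
  rcases hab.lt_or_gt with h1 | h1 <;> rcases hcd.lt_or_gt with h2 | h2
  · exact Or.inl (pow2_core h1 h2 h)
  · have := pow2_core h1 h2 (by rw [h, add_comm]); exact Or.inr this
  · have := pow2_core h1 h2 (by rw [← h, add_comm]); exact Or.inr ⟨this.2, this.1⟩
  · have := pow2_core h1 h2 (by rw [add_comm, h, add_comm]); exact Or.inl ⟨this.2, this.1⟩

private lemma pow2_sum_lt {a b n : ℕ} (ha : a < n) (hb : b < n) (hab : a ≠ b) :
    2^a + 2^b < 2^n := by
  wlog h : a < b generalizing a b with H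
  · rw [add_comm]; exact H hb ha (Ne.symm hab) (by omega)
  have h1 : (2:ℕ)^a < 2^b := Nat.pow_lt_pow_right (by norm_num) h
  have h2 : (2:ℕ)^(b+1) ≤ 2^n := Nat.pow_le_pow_right (by norm_num) (by omega)
  have h3 : (2:ℕ)^(b+1) = 2^b + 2^b := by rw [pow_succ]; omega
  omega

private lemma coeff_rel {K : Type*} [Field K] [Fintype K] {ι : Type*} [Fintype ι]
    (d : ι → K) (e : ι → ℕ) (he : ∀ t, e t < Fintype.card K)
    (h : ∀ x : K, ∑ t, d t * x ^ e t = 0) (u : ℕ) :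
    ∑ t, (if e t = u then d t else 0) = 0 := by
  classical
  set P : Polynomial K := ∑ t, Polynomial.C (d t) * Polynomial.X ^ e t with hP
  have hdeg : P.natDegree < Fintype.card K := by
    have hcard : 0 < Fintype.card K := Fintype.card_pos
    have : P.natDegree ≤ Fintype.card K - 1 := by
      apply Polynomial.natDegree_sum_le_of_forall_le
      intro t _
      refine le_trans (Polynomial.natDegree_C_mul_le _ _) ?_
      rw [Polynomial.natDegree_X_pow]
      have := he t
      omega
    omega
  have hzero : P = 0 := by
    apply Polynomial.eq_zero_of_natDegree_lt_card_of_eval_eq_zero P Function.injective_id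
    · intro x
      rw [hP, Polynomial.eval_finset_sum]
      simpa using h x
    · simpa using hdeg
  have := congrArg (fun Q : Polynomial K => Q.coeff u) hzero
  simp only [hP, Polynomial.finset_sum_coeff, Polynomial.coeff_C_mul,
    Polynomial.coeff_X_pow, Polynomial.coeff_zero] at this
  calc ∑ t, (if e t = u then d t else 0)
      = ∑ t, d t * (if u = e t then 1 else 0) := by
        apply Finset.sum_congr rfl
        intro t _
        by_cases ht : e t = u
        · simp [ht]
        · have hu : ¬ u = e t := fun hh => ht hh.symm
          simp [ht, hu]
    _ = 0 := this

private lemma pow_two_pow_mod {K : Type*} [Field K] [Fintype K] {n : ℕ}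
    (hcard : Fintype.card K = 2 ^ n) (hn : 0 < n) (x : K) (a : ℕ) :
    x ^ 2 ^ a = x ^ 2 ^ (a % n) := by
  have hbase : ∀ y : K, y ^ (2:ℕ) ^ n = y := by
    intro y
    have := FiniteField.pow_card y
    rwa [hcard] at this
  have hmul : ∀ (q : ℕ) (y : K), y ^ (2:ℕ) ^ (n * q) = y := by
    intro q
    induction q with
    | zero => intro y; simp
    | succ q ih =>
      intro y
      have : (2:ℕ) ^ (n * (q+1)) = 2 ^ (n*q) * 2 ^ n := by rw [← pow_add]; ring_nf
      rw [this, pow_mul, ih, hbase]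
  conv_lhs => rw [← Nat.div_add_mod a n]
  rw [pow_add, pow_mul', ← pow_mul, pow_mul, hmul]

private lemma exists_coeffs {K : Type*} [Field K] [Fintype K] [CharP K 2] {n : ℕ}
    [NeZero n] (hcard : Fintype.card K = 2 ^ n) (f : K →+ K) :
    ∃ c : ZMod n → K, ∀ x : K, f x = ∑ j : ZMod n, c j * x ^ 2 ^ (ZMod.val j) := by
  classical
  haveI : Fact (Nat.Prime 2) := ⟨Nat.prime_two⟩
  letI : Algebra (ZMod 2) K := ZMod.algebra _ _
  -- the Frobenius-power linear maps
  have hadd : ∀ (j : ZMod n) (x y : K), (x + y) ^ (2:ℕ) ^ j.val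
      = x ^ (2:ℕ) ^ j.val + y ^ (2:ℕ) ^ j.val := fun j x y => add_pow_char_pow x y 2 j.val
  let ψ : ZMod n → (K →ₗ[ZMod 2] K) := fun j =>
    AddMonoidHom.toZModLinearMap 2
      { toFun := fun x => x ^ (2:ℕ) ^ j.val
        map_zero' := zero_pow (pow_ne_zero _ (by norm_num))
        map_add' := hadd j }
  have hψ : ∀ (j : ZMod n) (x : K), ψ j x = x ^ (2:ℕ) ^ j.val := fun _ _ => rfl
  -- linear independence over K
  have hind : LinearIndependent K ψ := by
    rw [Fintype.linearIndependent_iff]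
    intro g hg j
    have hfun : ∀ x : K, ∑ z : ZMod n, g z * x ^ 2 ^ (ZMod.val z) = 0 := by
      intro x
      have := congrArg (fun F : K →ₗ[ZMod 2] K => F x) hg
      simpa [hψ] using this
    have hb : ∀ z : ZMod n, 2 ^ z.val < Fintype.card K := by
      intro z
      rw [hcard]
      exact Nat.pow_lt_pow_right (by norm_num) (ZMod.val_lt z)
    have := coeff_rel g (fun z => 2 ^ z.val) hb hfun (2 ^ j.val)
    rwa [Finset.sum_eq_single j (fun z _ hz => by
        have : z.val ≠ j.val := fun h => hz (ZMod.val_injective n h)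
        simp [Nat.pow_right_injective (le_refl 2) |>.ne this]
      ) (fun h => absurd (Finset.mem_univ j) h), if_pos rfl] at this
  -- finrank computation
  have hfr : Module.finrank (ZMod 2) K = n := by
    have hc := Module.card_eq_pow_finrank (K := ZMod 2) (V := K)
    rw [ZMod.card, hcard] at hc
    exact (Nat.pow_right_injective (le_refl 2) hc.symm)
  have hfr2 : Module.finrank K (K →ₗ[ZMod 2] K) = n := by
    let B := Module.finBasis (ZMod 2) K
    let e := B.constr (M' := K) K
    have := LinearEquiv.finrank_eq e
    rw [← this, Module.finrank_fin_fun, hfr]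
  -- basis
  let B2 : Module.Basis (ZMod n) K (K →ₗ[ZMod 2] K) :=
    basisOfLinearIndependentOfCardEqFinrank hind (by rw [ZMod.card, hfr2])
  have hB2 : ∀ j, B2 j = ψ j := fun j => by
    simp [B2, coe_basisOfLinearIndependentOfCardEqFinrank]
  let f' : K →ₗ[ZMod 2] K := AddMonoidHom.toZModLinearMap 2 f
  refine ⟨fun j => B2.repr f' j, fun x => ?_⟩
  have := B2.sum_repr f'
  have happ := congrArg (fun F : K →ₗ[ZMod 2] K => F x) this
  simp only [LinearMap.coe_sum, Finset.sum_apply, LinearMap.smul_apply, smul_eq_mul] at happ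
  have hfx : f x = f' x := rfl
  rw [hfx, ← happ]
  exact Finset.sum_congr rfl fun j _ => by rw [hB2 j, hψ]

private def expE (n i : ℕ) (m : ZMod n) : ℕ :=
  2 ^ (m + (i : ZMod n)).val + 2 ^ m.val

private def expF (n i : ℕ) (p : ZMod n × ZMod n) : ℕ :=
  if p.1 + (i : ZMod n) = p.2 then 2 ^ (p.2 + 1).val
  else 2 ^ (p.1 + (i : ZMod n)).val + 2 ^ p.2.val

private lemma stmt16_forward (n i : ℕ) (hn : 5 ≤ n) (hi1 : 1 ≤ i) (hin : i < n)
    (hgcd : Nat.gcd i n = 1)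
    {K : Type*} [Field K] [Fintype K] [CharP K 2]
    (hcard : Fintype.card K = 2 ^ n)
    (L₁ L₂ : K ≃+ K)
    (hL : ∀ x : K, L₁ (x ^ (2 ^ i + 1)) = (L₂ x) ^ (2 ^ i + 1)) :
    ∃ a : K, a ≠ 0 ∧ ∃ k < n,
      (∀ x : K, L₁ x = a ^ (2 ^ i + 1) * x ^ 2 ^ k) ∧
      (∀ x : K, L₂ x = a * x ^ 2 ^ k) := by
  classical
  haveI : NeZero n := ⟨by omega⟩
  haveI : Fact (1 < n) := ⟨by omega⟩
  haveI : Fact (Nat.Prime 2) := ⟨Nat.prime_two⟩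
  obtain ⟨b, hb⟩ := exists_coeffs hcard L₁.toAddMonoidHom
  obtain ⟨c, hc⟩ := exists_coeffs hcard L₂.toAddMonoidHom
  have hb' : ∀ x : K, L₁ x = ∑ j : ZMod n, b j * x ^ 2 ^ j.val := hb
  have hc' : ∀ x : K, L₂ x = ∑ j : ZMod n, c j * x ^ 2 ^ j.val := hc
  -- basic ZMod facts
  have hmulne : ∀ k : ℕ, 0 < k → k < 5 → ((k * i : ℕ) : ZMod n) ≠ 0 := by
    intro k hk1 hk2 h
    rw [ZMod.natCast_eq_zero_iff] at h
    have hco : Nat.Coprime n i := Nat.coprime_comm.mp hgcd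
    have : n ∣ k := hco.dvd_of_dvd_mul_right h
    have := Nat.le_of_dvd hk1 this
    omega
  have hiz : (i : ZMod n) ≠ 0 := by
    have := hmulne 1 one_pos (by norm_num)
    rwa [one_mul] at this
  have h2iz : (i : ZMod n) + (i : ZMod n) ≠ 0 := by
    have := hmulne 2 two_pos (by norm_num)
    rwa [show ((2 * i : ℕ) : ZMod n) = (i : ZMod n) + (i : ZMod n) by push_cast; ring] at this
  have h4iz : (i : ZMod n) + (i : ZMod n) + (i : ZMod n) + (i : ZMod n) ≠ 0 := by
    have := hmulne 4 (by norm_num) (by norm_num)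
    rwa [show ((4 * i : ℕ) : ZMod n) = (i : ZMod n) + (i : ZMod n) + (i : ZMod n) + (i : ZMod n)
      by push_cast; ring] at this
  have hvne : ∀ u v : ZMod n, u ≠ v → u.val ≠ v.val :=
    fun u v h hh => h (ZMod.val_injective n hh)
  have hEne : ∀ m : ZMod n, m + (i : ZMod n) ≠ m := by
    intro m h
    exact hiz (by rwa [add_eq_left] at h)
  have hvadd : ∀ z : ZMod n, (z + (i : ZMod n)).val = (z.val + i) % n := by
    intro z
    rw [ZMod.val_add, ZMod.val_cast_of_lt hin]
  -- power identity
  have hx2 : ∀ (x : K) (z : ZMod n),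
      x ^ (2:ℕ) ^ (z + (i : ZMod n)).val = (x ^ (2:ℕ) ^ z.val) ^ (2:ℕ) ^ i := by
    intro x z
    rw [hvadd, ← pow_two_pow_mod hcard (by omega) x (z.val + i), pow_add, pow_mul]
  -- the functional identity
  have hfun : ∀ x : K,
      (∑ m : ZMod n, b m * x ^ expE n i m)
        + (∑ p : ZMod n × ZMod n, (c p.1) ^ (2:ℕ) ^ i * c p.2 * x ^ expF n i p) = 0 := by
    intro x
    have hA : L₁ (x ^ (2 ^ i + 1)) = ∑ m : ZMod n, b m * x ^ expE n i m := by
      rw [hb']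
      refine Finset.sum_congr rfl fun m _ => ?_
      congr 1
      rw [← pow_mul]
      have hexp : (2 ^ i + 1) * 2 ^ m.val = 2 ^ (i + m.val) + 2 ^ m.val := by
        rw [add_mul, one_mul, ← pow_add]
      rw [hexp]
      show x ^ (2 ^ (i + m.val) + 2 ^ m.val) = x ^ (2 ^ (m + (i:ZMod n)).val + 2 ^ m.val)
      rw [pow_add x (2 ^ (i + m.val)) (2 ^ m.val),
        pow_add x (2 ^ (m + (i:ZMod n)).val) (2 ^ m.val)]
      congr 1
      rw [pow_two_pow_mod hcard (by omega) x (i + m.val), hvadd, Nat.add_comm i m.val]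
    have hB : (L₂ x) ^ (2 ^ i + 1)
        = ∑ p : ZMod n × ZMod n, (c p.1) ^ (2:ℕ) ^ i * c p.2 * x ^ expF n i p := by
      rw [hc']
      rw [pow_succ]
      rw [sum_pow_char_pow]
      rw [Finset.sum_mul_sum]
      rw [Fintype.sum_prod_type]
      refine Finset.sum_congr rfl fun j _ => Finset.sum_congr rfl fun l _ => ?_
      rw [mul_pow, ← hx2 x j]
      by_cases hjl : j + (i : ZMod n) = l
      · have hFval : expF n i (j, l) = 2 ^ (l + 1).val := by
          rw [expF, if_pos hjl]
        rw [hFval, hjl]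
        have hxx : x ^ (2:ℕ) ^ l.val * x ^ (2:ℕ) ^ l.val = x ^ (2:ℕ) ^ (l + 1).val := by
          rw [← pow_add]
          have : (2:ℕ) ^ l.val + 2 ^ l.val = 2 ^ (l.val + 1) := by rw [pow_succ]; ring
          rw [this, pow_two_pow_mod hcard (by omega) x (l.val + 1)]
          congr 2
          rw [ZMod.val_add, ZMod.val_one]
        calc c j ^ (2:ℕ) ^ i * x ^ (2:ℕ) ^ l.val * (c l * x ^ (2:ℕ) ^ l.val)
            = c j ^ (2:ℕ) ^ i * c l * (x ^ (2:ℕ) ^ l.val * x ^ (2:ℕ) ^ l.val) := by ring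
          _ = c j ^ (2:ℕ) ^ i * c l * x ^ (2:ℕ) ^ (l + 1).val := by rw [hxx]
      · have hFval : expF n i (j, l) = 2 ^ (j + (i:ZMod n)).val + 2 ^ l.val := by
          rw [expF, if_neg hjl]
        rw [hFval, pow_add]
        ring
    have hAB := hL x
    rw [hA, hB] at hAB
    rw [hAB]
    exact CharTwo.add_self_eq_zero _
  -- exponent bounds
  have hbound : ∀ t : ZMod n ⊕ ZMod n × ZMod n,
      Sum.elim (expE n i) (expF n i) t < Fintype.card K := by
    intro t
    rw [hcard]
    rcases t with m | p
    · exact pow2_sum_lt (ZMod.val_lt _) (ZMod.val_lt _) (hvne _ _ (hEne m))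
    · simp only [Sum.elim_inr, expF]
      by_cases hjl : p.1 + (i : ZMod n) = p.2
      · rw [if_pos hjl]
        exact Nat.pow_lt_pow_right (by norm_num) (ZMod.val_lt _)
      · rw [if_neg hjl]
        exact pow2_sum_lt (ZMod.val_lt _) (ZMod.val_lt _) (hvne _ _ hjl)
  -- coefficient relations
  have hcoeff : ∀ u : ℕ,
      (∑ m : ZMod n, (if expE n i m = u then b m else 0))
        + (∑ p : ZMod n × ZMod n,
            (if expF n i p = u then (c p.1) ^ (2:ℕ) ^ i * c p.2 else 0)) = 0 := by
    intro u
    have h0 := coeff_rel (Sum.elim b (fun p => (c p.1) ^ (2:ℕ) ^ i * c p.2))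
      (Sum.elim (expE n i) (expF n i)) hbound (fun x => by
        rw [Fintype.sum_sum_type]
        simpa using hfun x) u
    rw [Fintype.sum_sum_type] at h0
    simp only [Sum.elim_inl, Sum.elim_inr] at h0
    convert h0
    all_goals exact if_congr Iff.rfl rfl rfl
  -- Relation R1: weight-one exponents
  have R1 : ∀ l : ZMod n, (c (l - (i : ZMod n))) ^ (2:ℕ) ^ i * c l = 0 := by
    intro l
    have h0 := hcoeff (2 ^ ((l + 1 : ZMod n)).val)
    have hEzero : (∑ m : ZMod n,
        (if expE n i m = 2 ^ ((l + 1 : ZMod n)).val then b m else 0)) = 0 :=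
      Finset.sum_eq_zero fun m _ => if_neg (pow2_ne (hvne _ _ (hEne m)))
    rw [hEzero, zero_add] at h0
    rw [Finset.sum_eq_single ((l - (i:ZMod n), l) : ZMod n × ZMod n)
      (fun p _ hp => by
        apply if_neg
        intro hFp
        rw [expF] at hFp
        by_cases hb1 : p.1 + (i:ZMod n) = p.2
        · rw [if_pos hb1] at hFp
          have h1 : (p.2 + 1).val = (l + 1).val := Nat.pow_right_injective (le_refl 2) hFp
          have h2 : p.2 = l := add_right_cancel (ZMod.val_injective n h1)
          have h3 : p.1 = l - (i:ZMod n) := eq_sub_iff_add_eq.mpr (h2 ▸ hb1)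
          exact hp (Prod.ext h3 h2)
        · rw [if_neg hb1] at hFp
          exact (pow2_ne (hvne _ _ hb1)) hFp)
      (fun h => absurd (Finset.mem_univ _) h)] at h0
    rwa [if_pos (by
      rw [expF]
      have hcond : (l - (i:ZMod n), l).1 + (i:ZMod n) = (l - (i:ZMod n), l).2 := by
        show l - (i:ZMod n) + (i:ZMod n) = l
        ring
      rw [if_pos hcond])] at h0
  -- Relation R2: off-diagonal weight-two exponents
  have R2 : ∀ A B : ZMod n, A ≠ B → A ≠ B + (i:ZMod n) → B ≠ A + (i:ZMod n) →
      (c (A - (i:ZMod n))) ^ (2:ℕ) ^ i * c B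
        + (c (B - (i:ZMod n))) ^ (2:ℕ) ^ i * c A = 0 := by
    intro A B hAB hAB1 hBA1
    have h0 := hcoeff (2 ^ A.val + 2 ^ B.val)
    have hEzero : (∑ m : ZMod n,
        (if expE n i m = 2 ^ A.val + 2 ^ B.val then b m else 0)) = 0 := by
      apply Finset.sum_eq_zero
      intro m _
      apply if_neg
      intro hEm
      rcases pow2_pair (hvne _ _ (hEne m)) (hvne _ _ hAB) hEm with ⟨h1, h2⟩ | ⟨h1, h2⟩
      · have e1 : m + (i:ZMod n) = A := ZMod.val_injective n h1
        have e2 : m = B := ZMod.val_injective n h2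
        exact hAB1 (by rw [← e1, e2])
      · have e1 : m + (i:ZMod n) = B := ZMod.val_injective n h1
        have e2 : m = A := ZMod.val_injective n h2
        exact hBA1 (by rw [← e1, e2])
    rw [hEzero, zero_add] at h0
    have hsub : ∀ p ∈ (Finset.univ : Finset (ZMod n × ZMod n)),
        p ∉ ({(A - (i:ZMod n), B), (B - (i:ZMod n), A)} : Finset (ZMod n × ZMod n)) →
        (if expF n i p = 2 ^ A.val + 2 ^ B.val
          then (c p.1) ^ (2:ℕ) ^ i * c p.2 else 0) = 0 := by
      intro p _ hp
      apply if_neg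
      intro hFp
      rw [expF] at hFp
      by_cases hb1 : p.1 + (i:ZMod n) = p.2
      · rw [if_pos hb1] at hFp
        exact (pow2_ne (hvne _ _ hAB)) hFp.symm
      · rw [if_neg hb1] at hFp
        rcases pow2_pair (hvne _ _ hb1) (hvne _ _ hAB) hFp with ⟨h1, h2⟩ | ⟨h1, h2⟩
        · have e1 : p.1 + (i:ZMod n) = A := ZMod.val_injective n h1
          have e2 : p.2 = B := ZMod.val_injective n h2
          have e3 : p.1 = A - (i:ZMod n) := eq_sub_iff_add_eq.mpr e1
          exact hp (by simp [Prod.ext_iff, e3, e2])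
        · have e1 : p.1 + (i:ZMod n) = B := ZMod.val_injective n h1
          have e2 : p.2 = A := ZMod.val_injective n h2
          have e3 : p.1 = B - (i:ZMod n) := eq_sub_iff_add_eq.mpr e1
          exact hp (by simp [Prod.ext_iff, e3, e2])
    have hpairne : ((A - (i:ZMod n), B) : ZMod n × ZMod n) ≠ (B - (i:ZMod n), A) := by
      intro h
      exact hAB (congrArg Prod.snd h).symm
    rw [← Finset.sum_subset (Finset.subset_univ _) hsub, Finset.sum_pair hpairne] at h0
    have hf1 : expF n i (A - (i:ZMod n), B) = 2 ^ A.val + 2 ^ B.val := by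
      rw [expF]
      have hcond : ¬ ((A - (i:ZMod n), B) : _ × _).1 + (i:ZMod n) = (A - (i:ZMod n), B).2 := by
        show ¬ (A - (i:ZMod n) + (i:ZMod n) = B)
        rw [show A - (i:ZMod n) + (i:ZMod n) = A from by ring]
        exact hAB
      rw [if_neg hcond]
      show 2 ^ (A - (i:ZMod n) + (i:ZMod n)).val + 2 ^ B.val = _
      rw [show A - (i:ZMod n) + (i:ZMod n) = A from by ring]
    have hf2 : expF n i (B - (i:ZMod n), A) = 2 ^ A.val + 2 ^ B.val := by
      rw [expF]
      have hcond : ¬ ((B - (i:ZMod n), A) : _ × _).1 + (i:ZMod n) = (B - (i:ZMod n), A).2 := by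
        show ¬ (B - (i:ZMod n) + (i:ZMod n) = A)
        rw [show B - (i:ZMod n) + (i:ZMod n) = B from by ring]
        exact fun h => hAB h.symm
      rw [if_neg hcond]
      show 2 ^ (B - (i:ZMod n) + (i:ZMod n)).val + 2 ^ A.val = _
      rw [show B - (i:ZMod n) + (i:ZMod n) = B from by ring]
      omega
    rw [hf1, hf2, if_pos rfl, if_pos rfl] at h0
    exact h0
  -- Relation R3: diagonal weight-two exponents determine b
  have R3 : ∀ m : ZMod n, b m = (c m) ^ (2:ℕ) ^ i * c m
      + (c (m - (i:ZMod n))) ^ (2:ℕ) ^ i * c (m + (i:ZMod n)) := by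
    intro m
    have h0 := hcoeff (expE n i m)
    rw [Finset.sum_eq_single m
      (fun z _ hz => by
        apply if_neg
        intro hEz
        rw [expE, expE] at hEz
        rcases pow2_pair (hvne _ _ (hEne z)) (hvne _ _ (hEne m)) hEz with ⟨h1, h2⟩ | ⟨h1, h2⟩
        · exact hz (ZMod.val_injective n h2)
        · have e1 : z + (i:ZMod n) = m := ZMod.val_injective n h1
          have e2 : z = m + (i:ZMod n) := ZMod.val_injective n h2
          apply h2iz
          have e3 : m + ((i:ZMod n) + (i:ZMod n)) = m + 0 := by
            rw [add_zero, ← add_assoc, ← e2, e1]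
          exact add_left_cancel e3)
      (fun h => absurd (Finset.mem_univ _) h), if_pos rfl] at h0
    have hsub : ∀ p ∈ (Finset.univ : Finset (ZMod n × ZMod n)),
        p ∉ ({(m, m), (m - (i:ZMod n), m + (i:ZMod n))} : Finset (ZMod n × ZMod n)) →
        (if expF n i p = expE n i m then (c p.1) ^ (2:ℕ) ^ i * c p.2 else 0) = 0 := by
      intro p _ hp
      apply if_neg
      intro hFp
      rw [expF, expE] at hFp
      by_cases hb1 : p.1 + (i:ZMod n) = p.2
      · rw [if_pos hb1] at hFp
        exact (pow2_ne (hvne _ _ (hEne m))) hFp.symm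
      · rw [if_neg hb1] at hFp
        rcases pow2_pair (hvne _ _ hb1) (hvne _ _ (hEne m)) hFp with ⟨h1, h2⟩ | ⟨h1, h2⟩
        · have e1 : p.1 + (i:ZMod n) = m + (i:ZMod n) := ZMod.val_injective n h1
          have e2 : p.2 = m := ZMod.val_injective n h2
          have e3 : p.1 = m := add_right_cancel e1
          exact hp (by simp [Prod.ext_iff, e3, e2])
        · have e1 : p.1 + (i:ZMod n) = m := ZMod.val_injective n h1
          have e2 : p.2 = m + (i:ZMod n) := ZMod.val_injective n h2
          have e3 : p.1 = m - (i:ZMod n) := eq_sub_iff_add_eq.mpr e1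
          exact hp (by simp [Prod.ext_iff, e3, e2])
    have hpairne : ((m, m) : ZMod n × ZMod n) ≠ (m - (i:ZMod n), m + (i:ZMod n)) := by
      intro h
      exact hEne m (congrArg Prod.snd h).symm
    rw [← Finset.sum_subset (Finset.subset_univ _) hsub, Finset.sum_pair hpairne] at h0
    have hf1 : expF n i (m, m) = expE n i m := by
      rw [expF]
      have hcond : ¬ ((m, m) : _ × _).1 + (i:ZMod n) = (m, m).2 := hEne m
      rw [if_neg hcond]
      rw [expE]
    have hf2 : expF n i (m - (i:ZMod n), m + (i:ZMod n)) = expE n i m := by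
      rw [expF]
      have hcond : ¬ ((m - (i:ZMod n), m + (i:ZMod n)) : _ × _).1 + (i:ZMod n)
          = (m - (i:ZMod n), m + (i:ZMod n)).2 := by
        show ¬ (m - (i:ZMod n) + (i:ZMod n) = m + (i:ZMod n))
        rw [show m - (i:ZMod n) + (i:ZMod n) = m from by ring]
        exact fun h => hEne m h.symm
      rw [if_neg hcond]
      show 2 ^ (m - (i:ZMod n) + (i:ZMod n)).val + 2 ^ (m + (i:ZMod n)).val = expE n i m
      rw [show m - (i:ZMod n) + (i:ZMod n) = m from by ring, expE]
      omega
    rw [hf1, hf2, if_pos rfl, if_pos rfl] at h0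
    have := eq_neg_of_add_eq_zero_left h0
    rwa [CharTwo.neg_eq] at this
  -- support argument
  have hzero_of : ∀ j : ZMod n, c j ≠ 0 → c (j + (i:ZMod n)) = 0 := by
    intro j hj
    have h1 := R1 (j + (i:ZMod n))
    rw [show j + (i:ZMod n) - (i:ZMod n) = j from by ring] at h1
    rcases mul_eq_zero.mp h1 with h | h
    · exact absurd h (pow_ne_zero _ hj)
    · exact h
  have hkey : ∀ j k : ZMod n, c j ≠ 0 → c k ≠ 0 → j ≠ k →
      k ≠ j + (i:ZMod n) + (i:ZMod n) → False := by
    intro j k hj hk hjk hk2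
    have hji : c (j + (i:ZMod n)) = 0 := hzero_of j hj
    have hcond1 : j + (i:ZMod n) ≠ k := fun h => hk (h ▸ hji)
    have hcond2 : j + (i:ZMod n) ≠ k + (i:ZMod n) := fun h => hjk (add_right_cancel h)
    have h2 := R2 (j + (i:ZMod n)) k hcond1 hcond2 hk2
    rw [show j + (i:ZMod n) - (i:ZMod n) = j from by ring, hji, mul_zero, add_zero] at h2
    exact (mul_ne_zero (pow_ne_zero _ hj) hk) h2
  have hsupp : ∀ j k : ZMod n, c j ≠ 0 → c k ≠ 0 → j = k := by
    intro j k hj hk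
    by_contra hjk
    by_cases h2 : k = j + (i:ZMod n) + (i:ZMod n)
    · apply hkey k j hk hj (Ne.symm hjk)
      intro hcontr
      rw [h2] at hcontr
      apply h4iz
      linear_combination hcontr.symm
    · exact hkey j k hj hk hjk h2
  have hex : ∃ k0 : ZMod n, c k0 ≠ 0 := by
    by_contra h
    push_neg at h
    have hz : L₂ 1 = 0 := by
      rw [hc']
      exact Finset.sum_eq_zero fun j _ => by rw [h j, zero_mul]
    have h1 : (1 : K) = 0 := L₂.injective (by rw [hz, map_zero])
    exact one_ne_zero h1
  obtain ⟨k0, hk0⟩ := hex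
  have hcz : ∀ j : ZMod n, j ≠ k0 → c j = 0 := by
    intro j hj
    by_contra h
    exact hj (hsupp j k0 h hk0)
  have hL2 : ∀ x : K, L₂ x = c k0 * x ^ 2 ^ k0.val := by
    intro x
    rw [hc', Finset.sum_eq_single k0 (fun j _ hj => by rw [hcz j hj, zero_mul])
      (fun h => absurd (Finset.mem_univ _) h)]
  have hbm : ∀ m : ZMod n, m ≠ k0 → b m = 0 := by
    intro m hm
    rw [R3 m, hcz m hm]
    by_cases h1 : m - (i:ZMod n) = k0
    · have h2 : m + (i:ZMod n) ≠ k0 := by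
        intro h
        apply h2iz
        have : m + (i:ZMod n) = m - (i:ZMod n) := by rw [h, ← h1]
        linear_combination this
      rw [hcz _ h2, mul_zero]
      simp
    · rw [hcz _ h1]
      simp
  have hbk0 : b k0 = (c k0) ^ (2 ^ i + 1) := by
    rw [R3 k0]
    have h1 : k0 - (i:ZMod n) ≠ k0 := by
      intro h
      apply hiz
      linear_combination -h
    rw [hcz _ h1]
    rw [pow_add, pow_one]
    simp
  have hL1 : ∀ x : K, L₁ x = (c k0) ^ (2 ^ i + 1) * x ^ 2 ^ k0.val := by
    intro x
    rw [hb', Finset.sum_eq_single k0 (fun j _ hj => by rw [hbm j hj, zero_mul])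
      (fun h => absurd (Finset.mem_univ _) h), hbk0]
  exact ⟨c k0, hk0, k0.val, ZMod.val_lt k0, hL1, hL2⟩

/-- Kaspers–Zhou: for the Gold function `G(x) = x^{2^i+1}` on
`F_{2^n}` with `gcd(i,n) = 1`, `n ≥ 5`, two invertible `F_2`-linear (= additive)
maps `L₁, L₂` satisfy `L₁ ∘ G = G ∘ L₂` iff `L₁(x) = a^{2^i+1} x^{2^k}` and
`L₂(x) = a x^{2^k}` for some `a ∈ F_{2^n}^×` and `k < n`; so the linear
automorphism group of `G` is (isomorphic to) `ΓL(1, 2^n)`. -/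
theorem stmt16 (n i : ℕ) (hn : 5 ≤ n) (hi1 : 1 ≤ i) (hin : i < n)
    (hgcd : Nat.gcd i n = 1)
    (K : Type*) [Field K] [Fintype K] [CharP K 2]
    (hcard : Fintype.card K = 2 ^ n)
    (L₁ L₂ : K ≃+ K) :
    (∀ x : K, L₁ (x ^ (2 ^ i + 1)) = (L₂ x) ^ (2 ^ i + 1)) ↔
    ∃ a : K, a ≠ 0 ∧ ∃ k < n,
      (∀ x : K, L₁ x = a ^ (2 ^ i + 1) * x ^ 2 ^ k) ∧
      (∀ x : K, L₂ x = a * x ^ 2 ^ k) := by 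
  constructor
  · exact stmt16_forward n i hn hi1 hin hgcd hcard L₁ L₂
  · rintro ⟨a, ha, k, hk, h1, h2⟩ x
    rw [h1, h2, mul_pow, pow_right_comm]
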